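/- Suppose each f_i : ℝ^d → ℝ is convex and L-smooth for i = 1,…,n. Let x₁,…,x_n ∈ ℝ^d, let x̄ = (1/n)∑_i x_i, d̄ = (1/n)∑_i ∇f_i(x_i), and f = (1/n)∑_i f_i. Then for any a, b ∈ ℝ^d: f(a) ≤ f(b) + ⟨d̄, a − b⟩ + L‖x̄ − a‖² + (L/n)∑_{i=1}^n ‖x_i − x̄‖². -/

import Mathlib

open Set Finset

lemma tangent_aux {d : ℕ} (f : EuclideanSpace ℝ (Fin d) → ℝ) (hdiff : Differentiable ℝ f)
    (hconv : ConvexOn ℝ Set.univ f) (p q : EuclideanSpace ℝ (Fin d)) :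
    f p + (inner ℝ (gradient f p) (q - p) : ℝ) ≤ f q := by
  set g : ℝ → ℝ := fun t => f (p + t • (q - p)) with hg
  have hgc : ConvexOn ℝ Set.univ g := by
    have h := hconv.comp_affineMap (AffineMap.lineMap p q)
    have heq : (f ∘ (AffineMap.lineMap p q)) = g := by
      funext t
      simp [g, AffineMap.lineMap_apply, add_comm]
    rw [heq] at h
    simpa using h
  have hc : HasDerivAt (fun t : ℝ => p + t • (q - p)) (q - p) 0 := by
    simpa using ((hasDerivAt_id (0:ℝ)).smul_const (q - p)).const_add p
  have hf : HasFDerivAt f ((InnerProductSpace.toDual ℝ _) (gradient f p)) p :=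
    hasGradientAt_iff_hasFDerivAt.mp (hdiff p).hasGradientAt
  have hgd : HasDerivAt g (inner ℝ (gradient f p) (q - p) : ℝ) 0 := by
    have hp : p + (0:ℝ) • (q - p) = p := by simp
    have := (hp ▸ hf).comp_hasDerivAt 0 hc
    simpa [g, Function.comp_def] using this
  have hslope := hgc.le_slope_of_hasDerivAt (mem_univ (0:ℝ)) (mem_univ (1:ℝ)) one_pos hgd
  rw [slope_def_field] at hslope
  have h0 : g 0 = f p := by simp [g]
  have h1 : g 1 = f q := by simp [g]
  rw [h0, h1] at hslope
  linarith [hslope]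

/-- Inexact-gradient descent lemma: for convex L-smooth f_i with
x̄ = (1/n)∑ x_i, d̄ = (1/n)∑ ∇f_i(x_i), f = (1/n)∑ f_i, and any a, b:
f(a) ≤ f(b) + ⟨d̄, a−b⟩ + L‖x̄−a‖² + (L/n)∑‖x_i−x̄‖². -/
theorem stmt6 {d n : ℕ} (hn : 0 < n) (L : ℝ) (hL : 0 < L)
    (fs : Fin n → EuclideanSpace ℝ (Fin d) → ℝ)
    (hdiff : ∀ i, Differentiable ℝ (fs i))
    (hconv : ∀ i, ConvexOn ℝ Set.univ (fs i))
    (hsmooth : ∀ i x y, fs i x ≤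
      fs i y + (inner ℝ (gradient (fs i) y) (x - y) : ℝ) + L / 2 * ‖x - y‖ ^ 2)
    (x : Fin n → EuclideanSpace ℝ (Fin d)) (a b : EuclideanSpace ℝ (Fin d)) :
    (1 / (n : ℝ)) * ∑ i, fs i a ≤
      (1 / (n : ℝ)) * ∑ i, fs i b
        + (inner ℝ ((1 / (n : ℝ)) • ∑ i, gradient (fs i) (x i)) (a - b) : ℝ)
        + L * ‖(1 / (n : ℝ)) • (∑ i, x i) - a‖ ^ 2
        + L / (n : ℝ) * ∑ i, ‖x i - (1 / (n : ℝ)) • (∑ j, x j)‖ ^ 2 := by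
  set xb : EuclideanSpace ℝ (Fin d) := (1 / (n : ℝ)) • (∑ j, x j) with hxb
  have hnR : (0:ℝ) < n := Nat.cast_pos.mpr hn
  -- per-index inequality
  have hA : ∀ i, fs i a ≤ fs i b + (inner ℝ (gradient (fs i) (x i)) (a - b) : ℝ)
      + L / 2 * ‖a - x i‖ ^ 2 := by
    intro i
    have h1 := hsmooth i a (x i)
    have h2 := tangent_aux (fs i) (hdiff i) (hconv i) (x i) b
    have hsplit : (inner ℝ (gradient (fs i) (x i)) (a - x i) : ℝ)
        = inner ℝ (gradient (fs i) (x i)) (a - b) + (inner ℝ (gradient (fs i) (x i)) (b - x i) : ℝ) := by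
      rw [← inner_add_right]
      congr 1
      abel
    rw [hsplit] at h1
    linarith
  -- norm bound
  have hB : ∀ i, ‖a - x i‖ ^ 2 ≤ 2 * ‖xb - a‖ ^ 2 + 2 * ‖x i - xb‖ ^ 2 := by
    intro i
    have hsum : a - x i = (a - xb) + (xb - x i) := by abel
    have htr : ‖a - x i‖ ≤ ‖a - xb‖ + ‖xb - x i‖ := by
      rw [hsum]; exact norm_add_le _ _
    have h1 : ‖a - xb‖ = ‖xb - a‖ := norm_sub_rev _ _
    have h2 : ‖xb - x i‖ = ‖x i - xb‖ := norm_sub_rev _ _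
    rw [h1, h2] at htr
    nlinarith [sq_nonneg (‖xb - a‖ - ‖x i - xb‖), norm_nonneg (a - x i),
      norm_nonneg (xb - a), norm_nonneg (x i - xb)]
  -- sum them
  have hsumA : ∑ i, fs i a ≤ ∑ i, (fs i b + (inner ℝ (gradient (fs i) (x i)) (a - b) : ℝ)
      + L / 2 * ‖a - x i‖ ^ 2) := Finset.sum_le_sum (fun i _ => hA i)
  have hsumB : ∑ i, ‖a - x i‖ ^ 2 ≤ ∑ i, (2 * ‖xb - a‖ ^ 2 + 2 * ‖x i - xb‖ ^ 2) :=
    Finset.sum_le_sum (fun i _ => hB i)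
  have hinner : (inner ℝ ((1 / (n : ℝ)) • ∑ i, gradient (fs i) (x i)) (a - b) : ℝ)
      = (1 / (n : ℝ)) * ∑ i, (inner ℝ (gradient (fs i) (x i)) (a - b) : ℝ) := by
    rw [real_inner_smul_left, sum_inner]
  have hcard : ∑ _i : Fin n, (2 * ‖xb - a‖ ^ 2 : ℝ) = n * (2 * ‖xb - a‖ ^ 2) := by
    rw [Finset.sum_const, Finset.card_univ, Fintype.card_fin, nsmul_eq_mul]
  have hexp : ∑ i, (fs i b + (inner ℝ (gradient (fs i) (x i)) (a - b) : ℝ)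
      + L / 2 * ‖a - x i‖ ^ 2)
      = ∑ i, fs i b + ∑ i, (inner ℝ (gradient (fs i) (x i)) (a - b) : ℝ)
        + L / 2 * ∑ i, ‖a - x i‖ ^ 2 := by
    rw [Finset.sum_add_distrib, Finset.sum_add_distrib, Finset.mul_sum]
  have hexp2 : ∑ i, (2 * ‖xb - a‖ ^ 2 + 2 * ‖x i - xb‖ ^ 2 : ℝ)
      = n * (2 * ‖xb - a‖ ^ 2) + 2 * ∑ i, ‖x i - xb‖ ^ 2 := by
    rw [Finset.sum_add_distrib, hcard, Finset.mul_sum]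
  rw [hinner]
  have hm : (0:ℝ) < 1 / n := by positivity
  have key : ∑ i, fs i a ≤ ∑ i, fs i b + ∑ i, (inner ℝ (gradient (fs i) (x i)) (a - b) : ℝ)
      + L / 2 * (n * (2 * ‖xb - a‖ ^ 2) + 2 * ∑ i, ‖x i - xb‖ ^ 2) := by
    calc ∑ i, fs i a ≤ _ := hsumA
      _ = _ := hexp
      _ ≤ _ := by
        gcongr
        calc ∑ i, ‖a - x i‖ ^ 2 ≤ _ := hsumB
          _ = _ := hexp2
  have hLn : L / (n:ℝ) = (1/n) * L := by field_simp
  have hfin : (1/(n:ℝ)) * (L / 2 * (n * (2 * ‖xb - a‖ ^ 2) + 2 * ∑ i, ‖x i - xb‖ ^ 2))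
      = L * ‖xb - a‖ ^ 2 + L / n * ∑ i, ‖x i - xb‖ ^ 2 := by
    field_simp
  nlinarith [mul_le_mul_of_nonneg_left key (le_of_lt hm), hfin]
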